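/- Let x = (a_1,...,a_n), y = (b_1,...,b_n), z = (c_1,...,c_n) be tuples of nonnegative integers with x ≤_D z ≤_D y. If the first n−1 entries of x, y, z all have the same non-increasing rearrangement and a_n = b_n, then c_n = a_n. -/

import Mathlib

/-- coinv: number of pairs i < j with 0 < a i < a j. -/
def coinv (n : ℕ) (a : Fin n → ℕ) : ℕ :=
  (Finset.univ.filter (fun p : Fin n × Fin n => p.1 < p.2 ∧ 0 < a p.1 ∧ a p.1 < a p.2)).card

/-- Length of a rook-monoid sequence: ∑_{i : a_i ≠ 0} (a_i + n - i) - coinv (1-based i). -/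
def rookLen (n : ℕ) (a : Fin n → ℕ) : ℤ :=
  (∑ i : Fin n, if a i ≠ 0 then ((a i : ℤ) + n - (i.val + 1)) else 0) - coinv n a

/-- A rook-monoid sequence: entries in {0,...,n} with distinct nonzero entries. -/
def IsRook (n : ℕ) (a : Fin n → ℕ) : Prop :=
  (∀ i, a i ≤ n) ∧ ∀ i j : Fin n, i ≠ j → a i ≠ 0 → a i ≠ a j

/-- Non-increasing rearrangement of a list. -/
def sortDesc (l : List ℕ) : List ℕ := l.insertionSort (· ≥ ·)

/-- Containment order: entrywise comparison of non-increasing rearrangements. -/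
def contLE (l m : List ℕ) : Prop := List.Forall₂ (· ≤ ·) (sortDesc l) (sortDesc m)

/-- Deodhar order: containment of all truncations. -/
def deodharLE (n : ℕ) (x y : Fin n → ℕ) : Prop :=
  ∀ k : ℕ, k ≤ n → contLE ((List.ofFn x).take k) ((List.ofFn y).take k)

lemma perm_sortDesc (l : List ℕ) : l.Perm (sortDesc l) :=
  (List.perm_insertionSort _ l).symm

lemma perm_of_sortDesc_eq {l m : List ℕ} (h : sortDesc l = sortDesc m) : l.Perm m :=
  ((perm_sortDesc l).trans (h ▸ List.Perm.refl _)).trans (perm_sortDesc m).symm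

lemma forall2_antisymm : ∀ {l m : List ℕ},
    List.Forall₂ (· ≤ ·) l m → List.Forall₂ (· ≤ ·) m l → l = m := by
  intro l m h1 h2
  induction h1 with
  | nil => rfl
  | cons hab h ih =>
      rcases h2 with _ | ⟨hba, h2'⟩
      rw [ih h2', Nat.le_antisymm hab hba]

lemma ofFn_decomp (n : ℕ) (x : Fin (n + 1) → ℕ) :
    List.ofFn x = (List.ofFn x).take n ++ [x (Fin.last n)] := by
  rw [List.ofFn_succ' x]
  simp [List.concat_eq_append, List.take_left']

theorem sandwich_last_entry (n : ℕ) (x y z : Fin (n + 1) → ℕ)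
    (h1 : deodharLE (n + 1) x z) (h2 : deodharLE (n + 1) z y)
    (hxy : sortDesc ((List.ofFn x).take n) = sortDesc ((List.ofFn y).take n))
    (hxz : sortDesc ((List.ofFn z).take n) = sortDesc ((List.ofFn x).take n))
    (hlast : x (Fin.last n) = y (Fin.last n)) :
    z (Fin.last n) = x (Fin.last n) := by
  have hx := ofFn_decomp n x
  have hy := ofFn_decomp n y
  have hz := ofFn_decomp n z
  -- full lists of x and y are permutations
  have hpermxy : (List.ofFn x).Perm (List.ofFn y) := by
    rw [hx, hy, ← hlast]
    exact (perm_of_sortDesc_eq hxy).append_right _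
  -- sortDesc of full lists equal
  have hsdxy : sortDesc (List.ofFn x) = sortDesc (List.ofFn y) := by
    exact List.Perm.eq_of_pairwise'
      (List.pairwise_insertionSort (· ≥ ·) _) (List.pairwise_insertionSort (· ≥ ·) _)
      (((perm_sortDesc _).symm.trans hpermxy).trans (perm_sortDesc _))
  have c1 := h1 (n + 1) le_rfl
  have c2 := h2 (n + 1) le_rfl
  unfold contLE at c1 c2
  rw [List.take_of_length_le (by simp), List.take_of_length_le (by simp)] at c1
  rw [List.take_of_length_le (by simp), List.take_of_length_le (by simp)] at c2
  rw [hsdxy] at c1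
  have hzeq : sortDesc (List.ofFn z) = sortDesc (List.ofFn y) :=
    forall2_antisymm c2 c1
  have hpermzy : (List.ofFn z).Perm (List.ofFn y) := perm_of_sortDesc_eq hzeq
  have hsum : (List.ofFn z).sum = (List.ofFn y).sum := hpermzy.sum_eq
  have hsumtake : ((List.ofFn z).take n).sum = ((List.ofFn y).take n).sum := by
    have : ((List.ofFn z).take n).Perm ((List.ofFn y).take n) :=
      perm_of_sortDesc_eq (hxz.trans hxy)
    exact this.sum_eq
  rw [hz, hy, List.sum_append, List.sum_append, hsumtake] at hsum
  simp only [List.sum_cons, List.sum_nil] at hsum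
  omega
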